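/- arXiv:2411.10884 — 2 statements merged into one kernel-verified Lean document; each statement's English description precedes it below -/
import Mathlib

section
/- Let x ∈ ℝ³ with x ≠ 0, H(x) ≠ 0, and H(x) not a scalar multiple of x. Define In = -x, B = In/‖In‖ + H(x)/‖H(x)‖ (the bisector). If Ω = α₁·In + α₂·B with α₁ > 0 and α₂ > 0, and Out = Refl(In, Ω), then there exist unique γ > 0 and λ > 0 such that λ·H(x) = x + γ·Out. That is, x is a physical point. -/
noncomputable section

/-- Dot product on ℝ³. -/
def dot3 (v w : Fin 3 → ℝ) : ℝ := v 0 * w 0 + v 1 * w 1 + v 2 * w 2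

/-- Euclidean norm on ℝ³. -/
def norm3 (v : Fin 3 → ℝ) : ℝ := Real.sqrt (dot3 v v)

/-- Reflection of `v` about `N`: Refl(v, N) = -v + 2((v·N)/(N·N))N. -/
def refl3 (v N : Fin 3 → ℝ) : Fin 3 → ℝ := -v + (2 * (dot3 v N / dot3 N N)) • N

lemma dot3_self_pos {v : Fin 3 → ℝ} (hv : v ≠ 0) : 0 < dot3 v v := by
  rcases lt_or_ge 0 (dot3 v v) with h | h
  · exact h
  · exfalso
    apply hv
    simp only [dot3] at h
    have h0 : v 0 = 0 := mul_self_eq_zero.mp (le_antisymm (by nlinarith [mul_self_nonneg (v 1), mul_self_nonneg (v 2)]) (mul_self_nonneg _))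
    have h1 : v 1 = 0 := mul_self_eq_zero.mp (le_antisymm (by nlinarith [mul_self_nonneg (v 0), mul_self_nonneg (v 2)]) (mul_self_nonneg _))
    have h2 : v 2 = 0 := mul_self_eq_zero.mp (le_antisymm (by nlinarith [mul_self_nonneg (v 0), mul_self_nonneg (v 1)]) (mul_self_nonneg _))
    funext i
    fin_cases i
    · exact h0
    · exact h1
    · exact h2


theorem physical_point (H : (Fin 3 → ℝ) → (Fin 3 → ℝ)) (x : Fin 3 → ℝ)
    (hx : x ≠ 0) (hHx : H x ≠ 0) (hind : ¬∃ s : ℝ, H x = s • x)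
    (α₁ α₂ : ℝ) (hα₁ : 0 < α₁) (hα₂ : 0 < α₂)
    (Ω : Fin 3 → ℝ)
    (hΩ : Ω = α₁ • (-x) + α₂ • ((norm3 (-x))⁻¹ • (-x) + (norm3 (H x))⁻¹ • H x)) :
    ∃ γ l : ℝ, 0 < γ ∧ 0 < l ∧ l • H x = x + γ • refl3 (-x) Ω ∧
      ∀ γ' l' : ℝ, 0 < γ' → 0 < l' → l' • H x = x + γ' • refl3 (-x) Ω →
        γ' = γ ∧ l' = l := by
  have hnegx : dot3 (-x) (-x) = dot3 x x := by simp only [dot3, Pi.neg_apply]; ring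
  have hA : 0 < dot3 (-x) (-x) := by rw [hnegx]; exact dot3_self_pos hx
  have hB : 0 < dot3 (H x) (H x) := dot3_self_pos hHx
  set na := norm3 (-x) with hnadef
  set nb := norm3 (H x) with hnbdef
  have hna : 0 < na := Real.sqrt_pos.mpr hA
  have hnb : 0 < nb := Real.sqrt_pos.mpr hB
  have hna2 : na ^ 2 = dot3 (-x) (-x) := Real.sq_sqrt hA.le
  have hnb2 : nb ^ 2 = dot3 (H x) (H x) := Real.sq_sqrt hB.le
  set A := dot3 (-x) (-x) with hAdef
  set Bq := dot3 (H x) (H x) with hBdef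
  set C := dot3 (-x) (H x) with hCdef
  have hCS : C ^ 2 ≤ A * Bq := by
    simp only [hAdef, hBdef, hCdef, dot3, Pi.neg_apply]
    nlinarith [sq_nonneg (x 0 * H x 1 - x 1 * H x 0), sq_nonneg (x 0 * H x 2 - x 2 * H x 0),
      sq_nonneg (x 1 * H x 2 - x 2 * H x 1)]
  have hnn : (na * nb) ^ 2 = A * Bq := by rw [mul_pow, hna2, hnb2]
  have hCge : -(na * nb) ≤ C := by
    nlinarith [hCS, hnn, sq_nonneg (C + na * nb), mul_pos hna hnb]
  have hCpn : 0 ≤ C + na * nb := by linarith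
  set P := α₁ + α₂ * na⁻¹ with hPdef
  set Q := α₂ * nb⁻¹ with hQdef
  have hP : 0 < P := by positivity
  have hQ : 0 < Q := by positivity
  have hPna : P * na = α₁ * na + α₂ := by rw [hPdef]; field_simp
  have hQnb : Q * nb = α₂ := by rw [hQdef]; field_simp
  have hΩ' : ∀ i, Ω i = P * (-x i) + Q * H x i := by
    intro i
    rw [hΩ]
    simp only [Pi.add_apply, Pi.smul_apply, Pi.neg_apply, smul_eq_mul]
    rw [hPdef, hQdef]
    ring
  set S := P * A + Q * C with hSdef
  have keyS : S = α₁ * na ^ 2 + Q * (C + na * nb) := by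
    rw [hSdef, ← hna2]
    linear_combination na * hPna - na * hQnb
  have hSpos : 0 < S := by
    rw [keyS]
    exact add_pos_of_pos_of_nonneg (mul_pos hα₁ (pow_pos hna 2)) (mul_nonneg hQ.le hCpn)
  set D := dot3 Ω Ω with hDdef
  have hDeq : D = P ^ 2 * A + 2 * P * Q * C + Q ^ 2 * Bq := by
    simp only [hDdef, hAdef, hBdef, hCdef, dot3, Pi.neg_apply, hΩ' 0, hΩ' 1, hΩ' 2]
    ring
  have keyD : D = (α₁ * na) ^ 2 + 2 * P * Q * (C + na * nb) := by
    rw [hDeq, ← hna2, ← hnb2]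
    linear_combination (P * na - Q * nb + α₁ * na) * hPna - (P * na - Q * nb + α₁ * na) * hQnb
  have hDpos : 0 < D := by
    rw [keyD]
    exact add_pos_of_pos_of_nonneg (pow_pos (mul_pos hα₁ hna) 2)
      (mul_nonneg (mul_nonneg (mul_nonneg two_pos.le hP.le) hQ.le) hCpn)
  set K := P ^ 2 * A - Q ^ 2 * Bq with hKdef
  have keyK : K = α₁ * na * (α₁ * na + 2 * α₂) := by
    rw [hKdef, ← hna2, ← hnb2]
    linear_combination (P * na + α₁ * na + α₂) * hPna - (Q * nb + α₂) * hQnb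
  have hKpos : 0 < K := by
    rw [keyK]
    have h8 : 0 < α₁ * na := mul_pos hα₁ hna
    exact mul_pos h8 (by linarith)
  have hDK : D = 2 * S * P - K := by rw [hDeq, hSdef, hKdef]; ring
  have hdxΩ : dot3 (-x) Ω = S := by
    simp only [hSdef, hAdef, hCdef, dot3, Pi.neg_apply, hΩ' 0, hΩ' 1, hΩ' 2]
    ring
  have hout : ∀ i, refl3 (-x) Ω i = x i + 2 * S / D * (P * (-x i) + Q * H x i) := by
    intro i
    simp only [refl3, Pi.add_apply, Pi.neg_apply, Pi.smul_apply, smul_eq_mul, neg_neg]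
    rw [hdxΩ, ← hDdef, hΩ' i]
    ring
  have hli : ∀ r s : ℝ, (∀ i, r * x i + s * H x i = 0) → r = 0 ∧ s = 0 := by
    intro r s h
    by_cases hs : s = 0
    · subst hs
      refine ⟨?_, rfl⟩
      by_contra hr
      apply hx
      funext i
      have hh := h i
      rw [zero_mul, add_zero] at hh
      exact (mul_eq_zero.mp hh).resolve_left hr
    · exfalso
      apply hind
      refine ⟨-r / s, funext fun i => ?_⟩
      have hh := h i
      simp only [Pi.smul_apply, smul_eq_mul]
      field_simp
      linarith [hh]
  have hDne : D ≠ 0 := hDpos.ne'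
  have hKne : K ≠ 0 := hKpos.ne'
  clear_value na nb A Bq C P Q S D K
  refine ⟨D / K, 2 * Q * S / K, div_pos hDpos hKpos,
    div_pos (mul_pos (mul_pos two_pos hQ) hSpos) hKpos, ?_, ?_⟩
  · funext i
    simp only [Pi.smul_apply, Pi.add_apply, smul_eq_mul]
    rw [hout i]
    field_simp
    linear_combination (-(x i)) * hDK
  · intro γ' l' hγ' hl' heq
    have hcomp : ∀ i, (1 - γ' * K / D) * x i + (γ' * (2 * S * Q) / D - l') * H x i = 0 := by
      intro i
      have hh := congrFun heq i
      simp only [Pi.smul_apply, Pi.add_apply, smul_eq_mul] at hh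
      rw [hout i] at hh
      field_simp at hh ⊢
      linear_combination (-1 : ℝ) * hh - γ' * x i * hDK
    obtain ⟨h1, h2⟩ := hli _ _ hcomp
    have hγeq : γ' = D / K := by
      field_simp at h1
      field_simp
      linarith [h1]
    constructor
    · exact hγeq
    · rw [hγeq] at h2
      field_simp at h2
      have h10 : 2 * S * Q - K * l' = 0 := by
        rcases mul_eq_zero.mp (show D * (2 * S * Q - K * l') = 0 by linear_combination D * h2) with h | h
        · exact absurd h hDne
        · exact h
      field_simp
      linear_combination (-1 : ℝ) * h10
end
end

section
/- Let H: ℝ³ → ℝ³ and ω₁, ω₂: ℝ³ → ℝ be continuously differentiable, with curl(ω₁(x)(-x) + ω₂(x)H(x)) = 0 everywhere. Then at any point x where ω₂(x) = 0, the gradient of ω₂ is orthogonal to the characteristic field: ∇ω₂(x) · ((-x) × H(x)) = 0. -/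
noncomputable section

/-- Partial derivative in the `i`-th coordinate direction. -/
def pd3 (i : Fin 3) (g : (Fin 3 → ℝ) → ℝ) (x : Fin 3 → ℝ) : ℝ :=
  fderiv ℝ g x (Pi.single i 1)

/-- The gradient of a scalar function on ℝ³. -/
def grad3 (g : (Fin 3 → ℝ) → ℝ) (x : Fin 3 → ℝ) : Fin 3 → ℝ := fun i => pd3 i g x

/-- The curl of a vector field on ℝ³. -/
def curl3 (F : (Fin 3 → ℝ) → (Fin 3 → ℝ)) (x : Fin 3 → ℝ) : Fin 3 → ℝ :=
  ![pd3 1 (fun y => F y 2) x - pd3 2 (fun y => F y 1) x,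
    pd3 2 (fun y => F y 0) x - pd3 0 (fun y => F y 2) x,
    pd3 0 (fun y => F y 1) x - pd3 1 (fun y => F y 0) x]

theorem grad_omega2_perp_charField
    (H : (Fin 3 → ℝ) → (Fin 3 → ℝ)) (ω₁ ω₂ : (Fin 3 → ℝ) → ℝ)
    (hH : ContDiff ℝ 1 H) (hω₁ : ContDiff ℝ 1 ω₁) (hω₂ : ContDiff ℝ 1 ω₂)
    (hcurl : ∀ x : Fin 3 → ℝ, curl3 (fun y => ω₁ y • (-y) + ω₂ y • H y) x = 0)
    (x : Fin 3 → ℝ) (hx : ω₂ x = 0) :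
    dot3 (grad3 ω₂ x) (crossProduct (-x) (H x)) = 0 := by
  have hHd : ∀ j, Differentiable ℝ (fun y : Fin 3 → ℝ => H y j) := fun j =>
    (differentiable_pi.mp (hH.differentiable one_ne_zero)) j
  have hω₁d := hω₁.differentiable one_ne_zero
  have hω₂d := hω₂.differentiable one_ne_zero
  have key : ∀ i j : Fin 3,
      pd3 i (fun y => (ω₁ y • (-y) + ω₂ y • H y) j) x
        = pd3 i ω₁ x * (-(x j)) + ω₁ x * (-(Pi.single i 1 : Fin 3 → ℝ) j)
          + (pd3 i ω₂ x * H x j + ω₂ x * pd3 i (fun y => H y j) x) := by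
    intro i j
    have hcoord : HasFDerivAt (fun y : Fin 3 → ℝ => y j)
        (ContinuousLinearMap.proj j (R := ℝ) (φ := fun _ : Fin 3 => ℝ)) x := by
      exact (ContinuousLinearMap.proj (R := ℝ) (φ := fun _ : Fin 3 => ℝ) j).hasFDerivAt
    have h1 := ((hω₁d x).hasFDerivAt).mul hcoord.neg
    have h2 := ((hω₂d x).hasFDerivAt).mul ((hHd j x).hasFDerivAt)
    have h3 := h1.add h2
    have heq : (fun y : Fin 3 → ℝ => (ω₁ y • (-y) + ω₂ y • H y) j)
        = fun y => ω₁ y * (-(y j)) + ω₂ y * H y j := by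
      funext y; simp [mul_comm]
    rw [pd3, heq, show (fun y : Fin 3 → ℝ => ω₁ y * (-(y j)) + ω₂ y * H y j) = ((ω₁ * -fun y => y j) + ω₂ * fun y => H y j) from rfl, h3.fderiv]
    simp [pd3, mul_comm]
    ring
  have e := hcurl x
  have e0 : pd3 1 (fun y => (ω₁ y • (-y) + ω₂ y • H y) 2) x
      - pd3 2 (fun y => (ω₁ y • (-y) + ω₂ y • H y) 1) x = 0 := congrFun e 0
  have e1 : pd3 2 (fun y => (ω₁ y • (-y) + ω₂ y • H y) 0) x
      - pd3 0 (fun y => (ω₁ y • (-y) + ω₂ y • H y) 2) x = 0 := congrFun e 1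
  have e2 : pd3 0 (fun y => (ω₁ y • (-y) + ω₂ y • H y) 1) x
      - pd3 1 (fun y => (ω₁ y • (-y) + ω₂ y • H y) 0) x = 0 := congrFun e 2
  rw [key, key] at e0 e1 e2
  simp only [hx, Pi.single_apply, if_neg, zero_mul, add_zero, mul_zero] at e0 e1 e2
  simp at e0 e1 e2
  simp only [dot3, grad3, cross_apply, Pi.neg_apply]
  norm_num [Matrix.cons_val_zero, Matrix.cons_val_one, Matrix.cons_val_two, Matrix.tail_cons, Matrix.head_cons]
  linear_combination (x 0) * e0 + (x 1) * e1 + (x 2) * e2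
end
end
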